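/- Let n ≥ 1, let a : S_n × S_n × ℝⁿ → [0,1] be a comparison array (measurable in its last argument, antisymmetric, and equivariant), let G be a subgroup of S_n, let f be the uniform probability mass function on G, let ε be an exchangeable random vector in ℝⁿ, and let σ be uniformly distributed on G, independent of ε. Define p^Pop(σ) = Σ_{π ∈ G} f(π)·a(π∘σ⁻¹, Id, ε) and p^Pop(Id) = Σ_{π ∈ G} f(π)·a(π, Id, ε). Then p^Pop(σ) has the same distribution as p^Pop(Id), and consequently for every α ∈ [0,1], P(p^Pop(Id) ≤ α) ≤ 2α, where this last probability is over ε alone. -/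

import Mathlib

open MeasureTheory
open scoped Classical ENNReal

lemma tournament_bound {β : Type*} (s : Finset β) (M : β → β → ℝ)
    (h1 : ∀ τ ∈ s, ∀ π ∈ s, M τ π + M π τ = 1)
    (hle : ∀ τ ∈ s, ∀ π ∈ s, M τ π ≤ 1)
    (α : ℝ) (hα : 0 ≤ α) :
    ((s.filter (fun τ => ∑ π ∈ s, M π τ ≤ α * s.card)).card : ℝ)
      ≤ 2 * α * s.card := by
  classical
  set S := s.filter (fun τ => ∑ π ∈ s, M π τ ≤ α * s.card) with hS
  have hSsub : S ⊆ s := Finset.filter_subset _ _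
  set k : ℝ := (S.card : ℝ) with hk
  set N : ℝ := (s.card : ℝ) with hN
  have hk0 : 0 ≤ k := Nat.cast_nonneg _
  have hN0 : 0 ≤ N := Nat.cast_nonneg _
  -- diagonal block sums to k²/2
  have hdiag : ∑ τ ∈ S, ∑ π ∈ S, M τ π = k ^ 2 / 2 := by
    have h2 : (∑ τ ∈ S, ∑ π ∈ S, M τ π) + (∑ τ ∈ S, ∑ π ∈ S, M π τ) = k ^ 2 := by
      rw [← Finset.sum_add_distrib]
      have : ∀ τ ∈ S, (∑ π ∈ S, M τ π) + (∑ π ∈ S, M π τ) = k := by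
        intro τ hτ
        rw [← Finset.sum_add_distrib]
        rw [Finset.sum_congr rfl (fun π hπ => h1 τ (hSsub hτ) π (hSsub hπ))]
        simp [hk]
      rw [Finset.sum_congr rfl this]
      simp [hk, sq]
    have hswap : (∑ τ ∈ S, ∑ π ∈ S, M π τ) = ∑ τ ∈ S, ∑ π ∈ S, M τ π :=
      Finset.sum_comm
    linarith [h2, hswap]
  -- row sums of members of S are large
  have hrow : ∀ τ ∈ S, N - α * N ≤ ∑ π ∈ s, M τ π := by
    intro τ hτ
    have hmem := Finset.mem_filter.mp hτ
    have hcol : ∑ π ∈ s, M π τ ≤ α * N := hmem.2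
    have : (∑ π ∈ s, M τ π) + (∑ π ∈ s, M π τ) = N := by
      rw [← Finset.sum_add_distrib,
        Finset.sum_congr rfl (fun π hπ => h1 τ hmem.1 π hπ)]
      simp [hN]
    linarith
  -- total over S of full row sums
  have hsplit : ∑ τ ∈ S, ∑ π ∈ s, M τ π ≤ k ^ 2 / 2 + k * (N - k) := by
    have : ∀ τ ∈ S, ∑ π ∈ s, M τ π
        = (∑ π ∈ S, M τ π) + ∑ π ∈ s \ S, M τ π := by
      intro τ hτ
      rw [← Finset.sum_union (Finset.disjoint_sdiff), Finset.union_sdiff_of_subset hSsub]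
    rw [Finset.sum_congr rfl this, Finset.sum_add_distrib, hdiag]
    have h2 : ∑ τ ∈ S, ∑ π ∈ s \ S, M τ π ≤ k * (N - k) := by
      have hb : ∀ τ ∈ S, ∑ π ∈ s \ S, M τ π ≤ N - k := by
        intro τ hτ
        calc ∑ π ∈ s \ S, M τ π ≤ ∑ π ∈ s \ S, 1 :=
              Finset.sum_le_sum (fun π hπ => hle τ (hSsub hτ) π (Finset.mem_sdiff.mp hπ).1)
          _ = ((s \ S).card : ℝ) := by simp
          _ = N - k := by
              rw [Finset.card_sdiff_of_subset hSsub]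
              rw [Nat.cast_sub (Finset.card_le_card hSsub)]
      calc ∑ τ ∈ S, ∑ π ∈ s \ S, M τ π ≤ ∑ τ ∈ S, (N - k) := Finset.sum_le_sum hb
        _ = k * (N - k) := by simp [hk, mul_comm]; ring
    linarith
  have hlow : k * (N - α * N) ≤ ∑ τ ∈ S, ∑ π ∈ s, M τ π := by
    calc k * (N - α * N) = ∑ _τ ∈ S, (N - α * N) := by simp [hk, mul_comm]; ring
      _ ≤ _ := Finset.sum_le_sum hrow
  nlinarith [hk0, hN0, mul_nonneg hα hN0]


/-- **Population p-value with uniform distribution on a subgroup.**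
If `f` is the uniform pmf on a subgroup `G ≤ S_n` and `σ` is uniform on `G`,
independent of the exchangeable vector `ε`, then `p^Pop(σ)` has the same
distribution as `p^Pop(Id)`, and consequently `P(p^Pop(Id) ≤ α) ≤ 2α`, a
probability over `ε` alone. -/
theorem population_pvalue_subgroup_validity
    {n : ℕ} (hn : 1 ≤ n)
    (a : Equiv.Perm (Fin n) → Equiv.Perm (Fin n) → (Fin n → ℝ) → ℝ)
    (ha01 : ∀ τ σ e, a τ σ e ∈ Set.Icc (0 : ℝ) 1)
    (hameas : ∀ τ σ, Measurable (a τ σ))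
    (hasym : ∀ τ σ e, a τ σ e + a σ τ e = 1)
    (haequi : ∀ (π₁ π₂ ρ : Equiv.Perm (Fin n)) (e : Fin n → ℝ),
      a π₁ π₂ (fun i => e (ρ i)) = a (π₁ * ρ⁻¹) (π₂ * ρ⁻¹) e)
    (G : Subgroup (Equiv.Perm (Fin n)))
    -- the uniform pmf on `G`:
    (f : Equiv.Perm (Fin n) → ℝ)
    (hf : ∀ π, f π = if π ∈ G then ((Nat.card G : ℝ))⁻¹ else 0)
    {Ω : Type*} [MeasurableSpace Ω] (P : Measure Ω) [IsProbabilityMeasure P]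
    (ε : Ω → Fin n → ℝ) (hε : Measurable ε)
    (hexch : ∀ π : Equiv.Perm (Fin n),
      Measure.map (fun ω => fun i => ε ω (π i)) P = Measure.map ε P)
    (σ : Ω → Equiv.Perm (Fin n))
    (hσmeas : ∀ τ : Equiv.Perm (Fin n), MeasurableSet {ω | σ ω = τ})
    -- `σ` is uniform on `G` and independent of `ε`:
    (hdist : ∀ s : Set (Fin n → ℝ), MeasurableSet s → ∀ τ : Equiv.Perm (Fin n),
      P {ω | ε ω ∈ s ∧ σ ω = τ} = P {ω | ε ω ∈ s} * ENNReal.ofReal (f τ))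
    (α : ℝ) (hα : α ∈ Set.Icc (0 : ℝ) 1) :
    Measure.map
        (fun ω => ∑ π : Equiv.Perm (Fin n), f π * a (π * (σ ω)⁻¹) 1 (ε ω)) P
      = Measure.map
        (fun ω => ∑ π : Equiv.Perm (Fin n), f π * a π 1 (ε ω)) P
    ∧ P {ω | ∑ π : Equiv.Perm (Fin n), f π * a π 1 (ε ω) ≤ α}
        ≤ ENNReal.ofReal (2 * α) := by
  classical
  -- basic facts about `f` and `G`
  have hfinv : ∀ τ, τ ∈ G → ∀ π, f (π * τ) = f π := by
    intro τ hτ π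
    rw [hf, hf, if_congr (mul_mem_cancel_right hτ) rfl rfl]
  -- the Q family
  set Q : Equiv.Perm (Fin n) → (Fin n → ℝ) → ℝ :=
    fun τ e => ∑ π : Equiv.Perm (Fin n), f π * a π τ e with hQ
  have hQmeas : ∀ τ, Measurable (Q τ) := by
    intro τ
    exact Finset.measurable_sum _ (fun π _ => (hameas π τ).const_mul _)
  -- reindexing: for τ ∈ G, summing a (π τ⁻¹) against f is the same as a π
  have hreindex : ∀ τ, τ ∈ G → ∀ e : Fin n → ℝ,
      (∑ π : Equiv.Perm (Fin n), f π * a (π * τ⁻¹) 1 e) = Q 1 e := by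
    intro τ hτ e
    rw [hQ]
    refine (Fintype.sum_equiv (Equiv.mulRight τ) _ _ ?_).symm
    intro π
    simp only [Equiv.coe_mulRight]
    rw [hfinv τ hτ π, mul_inv_cancel_right]
  constructor
  · -- Part 1: a.e. equality of the two random variables
    have hτnull : ∀ τ, τ ∉ G → P {ω | σ ω = τ} = 0 := by
      intro τ hτ
      have h := hdist Set.univ MeasurableSet.univ τ
      simpa [hf, hτ] using h
    have hGnull : P {ω | σ ω ∉ G} = 0 := by
      have hsub : {ω | σ ω ∉ G} ⊆
          ⋃ τ ∈ (Finset.univ.filter (fun τ => τ ∉ G) : Finset (Equiv.Perm (Fin n))),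
            {ω | σ ω = τ} := by
        intro ω hω
        simp only [Set.mem_iUnion]
        exact ⟨σ ω, by simpa using hω, rfl⟩
      refine measure_mono_null hsub ?_
      refine le_antisymm ?_ zero_le
      refine le_trans (measure_biUnion_finset_le _ _) ?_
      refine le_of_eq (Finset.sum_eq_zero ?_)
      intro τ hτ
      exact hτnull τ (by simpa using hτ)
    have hae : (fun ω => ∑ π : Equiv.Perm (Fin n), f π * a (π * (σ ω)⁻¹) 1 (ε ω))
        =ᵐ[P] (fun ω => ∑ π : Equiv.Perm (Fin n), f π * a π 1 (ε ω)) := by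
      refine measure_mono_null ?_ hGnull
      intro ω hω
      simp only [Set.mem_setOf_eq, Set.mem_compl_iff] at hω ⊢
      intro hσG
      exact hω (hreindex (σ ω) hσG (ε ω))
    exact Measure.map_congr hae
  · -- Part 2
    set s : Finset (Equiv.Perm (Fin n)) := Finset.univ.filter (fun τ => τ ∈ G) with hs
    have hcardG : (Nat.card G : ℝ) = (s.card : ℝ) := by
      rw [Nat.card_eq_fintype_card, Fintype.card_subtype]
    have hsN : 0 < s.card := by
      rw [Finset.card_pos]
      exact ⟨1, by simp [hs, one_mem]⟩
    set N : ℝ := (s.card : ℝ) with hNdef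
    have hN0 : 0 < N := Nat.cast_pos.mpr hsN
    -- Q τ restricted to s
    have hQs : ∀ τ e, Q τ e = N⁻¹ * ∑ π ∈ s, a π τ e := by
      intro τ e
      show (∑ π : Equiv.Perm (Fin n), f π * a π τ e) = _
      rw [Finset.mul_sum]
      rw [← Finset.sum_filter_add_sum_filter_not Finset.univ (fun π => π ∈ G)]
      have h2 : ∑ π ∈ Finset.univ.filter (fun π => π ∉ G), f π * a π τ e = 0 :=
        Finset.sum_eq_zero (fun π hπ => by
          rw [hf]
          simp [(by simpa using hπ : π ∉ G)])
      rw [h2, add_zero]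
      exact Finset.sum_congr rfl (fun π hπ => by
        rw [hf, if_pos (by simpa [hs] using hπ), hcardG])
    have hQiff : ∀ τ e, Q τ e ≤ α ↔ ∑ π ∈ s, a π τ e ≤ α * N := by
      intro τ e
      rw [hQs, inv_mul_le_iff₀ hN0, mul_comm N α]
    -- key exchangeability identity
    have hkey : ∀ τ, τ ∈ G → ∀ e : Fin n → ℝ,
        Q τ (fun i => e (τ i)) = Q 1 e := by
      intro τ hτ e
      show (∑ π : Equiv.Perm (Fin n), f π * a π τ (fun i => e (τ i))) = _
      have h1 : ∀ π : Equiv.Perm (Fin n),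
          a π τ (fun i => e (τ i)) = a (π * τ⁻¹) 1 e := by
        intro π
        rw [haequi π τ τ e, mul_inv_cancel]
      simp_rw [h1]
      exact hreindex τ hτ e
    have hmeasset : ∀ τ, MeasurableSet {e : Fin n → ℝ | Q τ e ≤ α} :=
      fun τ => measurableSet_le (hQmeas τ) measurable_const
    have hpermmeas : ∀ τ : Equiv.Perm (Fin n),
        Measurable (fun ω => fun i => ε ω (τ i)) :=
      fun τ => measurable_pi_iff.mpr (fun i => (measurable_pi_apply (τ i)).comp hε)
    have hAmeas : ∀ τ, MeasurableSet {ω | Q τ (ε ω) ≤ α} :=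
      fun τ => hε (hmeasset τ)
    -- all events have the same probability
    have hA : ∀ τ ∈ s, P {ω | Q τ (ε ω) ≤ α} = P {ω | Q 1 (ε ω) ≤ α} := by
      intro τ hτs
      have hτ : τ ∈ G := by simpa [hs] using hτs
      calc P {ω | Q τ (ε ω) ≤ α}
          = Measure.map ε P {e | Q τ e ≤ α} :=
            (Measure.map_apply hε (hmeasset τ)).symm
        _ = Measure.map (fun ω => fun i => ε ω (τ i)) P {e | Q τ e ≤ α} := by
            rw [hexch τ]
        _ = P {ω | Q τ (fun i => ε ω (τ i)) ≤ α} :=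
            Measure.map_apply (hpermmeas τ) (hmeasset τ)
        _ = P {ω | Q 1 (ε ω) ≤ α} := by
            congr 1
            ext ω
            simp only [Set.mem_setOf_eq, hkey τ hτ (ε ω)]
    -- sum of probabilities = integral of counting function
    have hsum_eq : (s.card : ℝ≥0∞) * P {ω | Q 1 (ε ω) ≤ α}
        = ∑ τ ∈ s, P {ω | Q τ (ε ω) ≤ α} := by
      rw [Finset.sum_congr rfl hA, Finset.sum_const, nsmul_eq_mul]
    have hlin : ∑ τ ∈ s, P {ω | Q τ (ε ω) ≤ α}
        = ∫⁻ ω, (∑ τ ∈ s, Set.indicator {ω' | Q τ (ε ω') ≤ α}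
            (1 : Ω → ℝ≥0∞) ω) ∂P := by
      rw [lintegral_finset_sum _
        (fun τ _ => (measurable_one.indicator (hAmeas τ)))]
      exact Finset.sum_congr rfl
        (fun τ _ => (lintegral_indicator_one (hAmeas τ)).symm)
    -- the pointwise combinatorial bound
    have hpt : ∀ ω, (∑ τ ∈ s, Set.indicator {ω' | Q τ (ε ω') ≤ α}
        (1 : Ω → ℝ≥0∞) ω) ≤ ENNReal.ofReal (2 * α * N) := by
      intro ω
      have h1 : (∑ τ ∈ s, Set.indicator {ω' | Q τ (ε ω') ≤ α}
          (1 : Ω → ℝ≥0∞) ω)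
          = ((s.filter (fun τ => Q τ (ε ω) ≤ α)).card : ℝ≥0∞) := by
        rw [← Finset.sum_boole]
        exact Finset.sum_congr rfl (fun τ _ => by
          rw [Set.indicator_apply]; rfl)
      rw [h1]
      have h2 : s.filter (fun τ => Q τ (ε ω) ≤ α)
          = s.filter (fun τ => ∑ π ∈ s, a π τ (ε ω) ≤ α * N) := by
        apply Finset.filter_congr
        intro τ _
        simp [hQiff τ (ε ω)]
      rw [h2]
      have h3 := tournament_bound s (fun τ π => a τ π (ε ω))
        (fun τ _ π _ => hasym τ π (ε ω))
        (fun τ _ π _ => (ha01 τ π (ε ω)).2)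
        α hα.1
      calc ((s.filter (fun τ => ∑ π ∈ s, a π τ (ε ω) ≤ α * N)).card : ℝ≥0∞)
          = ENNReal.ofReal ((s.filter
              (fun τ => ∑ π ∈ s, a π τ (ε ω) ≤ α * N)).card : ℝ) :=
            (ENNReal.ofReal_natCast _).symm
        _ ≤ ENNReal.ofReal (2 * α * N) := ENNReal.ofReal_le_ofReal h3
    -- assemble
    have hmain : (s.card : ℝ≥0∞) * P {ω | Q 1 (ε ω) ≤ α}
        ≤ ENNReal.ofReal (2 * α) * (s.card : ℝ≥0∞) := by
      rw [hsum_eq, hlin]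
      calc ∫⁻ ω, (∑ τ ∈ s, Set.indicator {ω' | Q τ (ε ω') ≤ α}
              (1 : Ω → ℝ≥0∞) ω) ∂P
          ≤ ∫⁻ _, ENNReal.ofReal (2 * α * N) ∂P := lintegral_mono hpt
        _ = ENNReal.ofReal (2 * α * N) := by
            simp [lintegral_const]
        _ = ENNReal.ofReal (2 * α) * (s.card : ℝ≥0∞) := by
            rw [ENNReal.ofReal_mul (by linarith [hα.1] : (0:ℝ) ≤ 2 * α)]
            rw [hNdef, ENNReal.ofReal_natCast]
    have hfin : P {ω | Q 1 (ε ω) ≤ α} ≤ ENNReal.ofReal (2 * α) := by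
      rw [mul_comm (ENNReal.ofReal (2 * α)) _] at hmain
      exact (ENNReal.mul_le_mul_iff_right
        (by exact_mod_cast hsN.ne') (ENNReal.natCast_ne_top _)).mp hmain
    exact hfin
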